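/- Let γ ≥ 0 and suppose A⁺, A⁻ : D → ℂ^{N×N} are continuous on a neighborhood D of 0 in ℂ with expansions A^±(z) = A₀ + A₁ z + Ã₂ z² log|z| + (∓ i 4π²/c² + A₂) z² + O(|z|³) as z → 0, where A₀, A₁, A₂, Ã₂ are fixed matrices. If Ω I − γ A₀ is invertible, then (z − Ω + γA⁺(z))⁻¹ − (z − Ω + γA⁻(z))⁻¹ = (i γ 8π²/c²) z² (Ω I − γ A₀)⁻² + o(|z|²) as z → 0. -/

import Mathlib

open Matrix Filter Asymptotics

attribute [local instance] Matrix.normedAddCommGroup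
attribute [local instance] Matrix.normedSpace

lemma mnorm_mul_le {n : ℕ} (A B : Matrix (Fin n) (Fin n) ℂ) :
    ‖A * B‖ ≤ n * ‖A‖ * ‖B‖ := by
  rw [Matrix.norm_le_iff (by positivity)]
  intro i j
  calc ‖(A * B) i j‖ = ‖∑ k, A i k * B k j‖ := by rw [Matrix.mul_apply]
    _ ≤ ∑ k, ‖A i k * B k j‖ := norm_sum_le _ _
    _ ≤ ∑ _k : Fin n, ‖A‖ * ‖B‖ := by
        refine Finset.sum_le_sum fun k _ => ?_
        rw [norm_mul]
        exact mul_le_mul (Matrix.norm_entry_le_entrywise_sup_norm A)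
          (Matrix.norm_entry_le_entrywise_sup_norm B) (norm_nonneg _) (norm_nonneg _)
    _ = n * ‖A‖ * ‖B‖ := by simp [Finset.sum_const, mul_assoc]

lemma mmul_isBigO {n : ℕ} {l : Filter ℂ} {f g : ℂ → Matrix (Fin n) (Fin n) ℂ}
    {k1 k2 : ℂ → ℝ} (hf : f =O[l] k1) (hg : g =O[l] k2) :
    (fun z => f z * g z) =O[l] fun z => k1 z * k2 z := by
  obtain ⟨C1, hC1n, hC1⟩ := hf.exists_nonneg
  obtain ⟨C2, hC2n, hC2⟩ := hg.exists_nonneg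
  rw [isBigO_iff]
  refine ⟨n * C1 * C2, ?_⟩
  filter_upwards [hC1.bound, hC2.bound] with z h1 h2
  calc ‖f z * g z‖ ≤ n * ‖f z‖ * ‖g z‖ := mnorm_mul_le _ _
    _ ≤ n * (C1 * ‖k1 z‖) * (C2 * ‖k2 z‖) := by
        refine mul_le_mul (mul_le_mul le_rfl h1 (norm_nonneg _) (by positivity)) h2
          (norm_nonneg _) (by positivity)
    _ = n * C1 * C2 * ‖k1 z * k2 z‖ := by rw [norm_mul]; ring

/-- If `A^±(z) = A₀ + A₁z + Ã₂ z² log|z| + (∓i4π²/c² + A₂)z² + O(|z|³)` near `0`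
and `ΩI − γA₀` is invertible, then
`(z−Ω+γA⁺(z))⁻¹ − (z−Ω+γA⁻(z))⁻¹ = (iγ8π²/c²) z² (ΩI−γA₀)⁻² + o(|z|²)` as `z → 0`. -/
theorem resolvent_difference_asymptotics (N : ℕ) (Ω c γ : ℝ)
    (hΩ : 0 < Ω) (hc : 0 < c) (hγ : 0 ≤ γ)
    (D : Set ℂ) (hD : D ∈ nhds (0 : ℂ))
    (Ap Am : ℂ → Matrix (Fin N) (Fin N) ℂ)
    (hApc : ContinuousOn Ap D) (hAmc : ContinuousOn Am D)
    (A0 A1 A2 At2 : Matrix (Fin N) (Fin N) ℂ)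
    (hp : (fun z : ℂ => Ap z - (A0 + z • A1 +
        ((z ^ 2 * (Real.log ‖z‖ : ℂ)) • At2) +
        (z ^ 2) • (A2 + (-(Complex.I) * (4 * (Real.pi : ℂ) ^ 2 / (c : ℂ) ^ 2)) • 1)))
      =O[nhdsWithin 0 {(0 : ℂ)}ᶜ] fun z : ℂ => ‖z‖ ^ 3)
    (hm : (fun z : ℂ => Am z - (A0 + z • A1 +
        ((z ^ 2 * (Real.log ‖z‖ : ℂ)) • At2) +
        (z ^ 2) • (A2 + (Complex.I * (4 * (Real.pi : ℂ) ^ 2 / (c : ℂ) ^ 2)) • 1)))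
      =O[nhdsWithin 0 {(0 : ℂ)}ᶜ] fun z : ℂ => ‖z‖ ^ 3)
    (hinv : IsUnit ((Ω : ℂ) • (1 : Matrix (Fin N) (Fin N) ℂ) - (γ : ℂ) • A0)) :
    (fun z : ℂ =>
        ((z - (Ω : ℂ)) • (1 : Matrix (Fin N) (Fin N) ℂ) + (γ : ℂ) • Ap z)⁻¹ -
        ((z - (Ω : ℂ)) • (1 : Matrix (Fin N) (Fin N) ℂ) + (γ : ℂ) • Am z)⁻¹ -
        (Complex.I * (γ : ℂ) * 8 * (Real.pi : ℂ) ^ 2 / (c : ℂ) ^ 2 * z ^ 2) •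
          (((Ω : ℂ) • (1 : Matrix (Fin N) (Fin N) ℂ) - (γ : ℂ) • A0)⁻¹ ^ 2))
      =o[nhdsWithin 0 {(0 : ℂ)}ᶜ] fun z : ℂ => ‖z‖ ^ 2 := by
  set l : Filter ℂ := nhdsWithin 0 {(0 : ℂ)}ᶜ with hldef
  set B : Matrix (Fin N) (Fin N) ℂ := (Ω : ℂ) • (1 : Matrix (Fin N) (Fin N) ℂ) - (γ : ℂ) • A0
    with hBdef
  -- the two resolvent-type functions
  set Fp : ℂ → Matrix (Fin N) (Fin N) ℂ :=
    fun z => (z - (Ω : ℂ)) • (1 : Matrix (Fin N) (Fin N) ℂ) + (γ : ℂ) • Ap z with hFpdef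
  set Fm : ℂ → Matrix (Fin N) (Fin N) ℂ :=
    fun z => (z - (Ω : ℂ)) • (1 : Matrix (Fin N) (Fin N) ℂ) + (γ : ℂ) • Am z with hFmdef
  -- remainder
  set R : ℂ → Matrix (Fin N) (Fin N) ℂ :=
    fun z => Am z - Ap z -
      (Complex.I * 8 * (Real.pi : ℂ) ^ 2 / (c : ℂ) ^ 2 * z ^ 2) • (1 : Matrix (Fin N) (Fin N) ℂ)
    with hRdef
  -- basic tendsto facts
  have hz0 : Tendsto (fun z : ℂ => z) l (nhds 0) := tendsto_id.mono_right nhdsWithin_le_nhds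
  have hz3 : Tendsto (fun z : ℂ => ‖z‖ ^ 3) l (nhds 0) := by
    have := (hz0.norm).pow 3; simpa using this
  have hlog : Tendsto (fun z : ℂ => z ^ 2 * (Real.log ‖z‖ : ℂ)) l (nhds 0) := by
    rw [tendsto_zero_iff_norm_tendsto_zero]
    have habs : Tendsto (fun z : ℂ => ‖z‖) l (nhdsWithin 0 (Set.Ioi 0)) := by
      rw [tendsto_nhdsWithin_iff]
      constructor
      · simpa using hz0.norm
      · filter_upwards [self_mem_nhdsWithin] with z hz
        exact norm_pos_iff.mpr hz
    have h2 := (tendsto_log_mul_rpow_nhdsGT_zero (by norm_num : (0:ℝ) < 2)).comp habs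
    have h3 : Tendsto (fun z : ℂ => |Real.log ‖z‖ * ‖z‖ ^ (2:ℝ)|) l
        (nhds 0) := by simpa using h2.abs
    refine h3.congr fun z => ?_
    have e1 : ‖z‖ ^ (2:ℝ) = ‖z‖ ^ (2:ℕ) := by
      rw [show (2:ℝ) = ((2:ℕ):ℝ) by norm_num, Real.rpow_natCast]
    rw [abs_mul, e1, norm_mul]
    simp [map_pow, abs_pow, abs_of_nonneg (norm_nonneg z), Complex.norm_real, mul_comm]
  -- A± tend to A0
  have hexp : ∀ (E : Matrix (Fin N) (Fin N) ℂ),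
      Tendsto (fun z : ℂ => A0 + z • A1 +
        ((z ^ 2 * (Real.log ‖z‖ : ℂ)) • At2) + (z ^ 2) • E) l (nhds A0) := by
    intro E
    have h1 : Tendsto (fun z : ℂ => z • A1) l (nhds 0) := by
      simpa using hz0.smul_const A1
    have h2 : Tendsto (fun z : ℂ => (z ^ 2 * (Real.log ‖z‖ : ℂ)) • At2) l
        (nhds 0) := by simpa using hlog.smul_const At2
    have h3 : Tendsto (fun z : ℂ => (z ^ 2) • E) l (nhds 0) := by
      simpa using (hz0.pow 2).smul_const E
    have := ((tendsto_const_nhds (x := A0)).add h1).add h2 |>.add h3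
    simpa using this
  have hAp0 : Tendsto Ap l (nhds A0) := by
    have h1 := hp.trans_tendsto hz3
    have h2 := hexp (A2 + (-(Complex.I) * (4 * (Real.pi : ℂ) ^ 2 / (c : ℂ) ^ 2)) • 1)
    have := h1.add h2
    simp at this; exact this
  have hAm0 : Tendsto Am l (nhds A0) := by
    have h1 := hm.trans_tendsto hz3
    have h2 := hexp (A2 + (Complex.I * (4 * (Real.pi : ℂ) ^ 2 / (c : ℂ) ^ 2)) • 1)
    have := h1.add h2
    simp at this; exact this
  -- F± tend to -B
  have hFpT : Tendsto Fp l (nhds (-B)) := by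
    have := ((hz0.sub_const (Ω:ℂ)).smul_const (1 : Matrix (Fin N) (Fin N) ℂ)).add
      (hAp0.const_smul (γ:ℂ))
    convert this using 2
    rw [hBdef]
    module
  have hFmT : Tendsto Fm l (nhds (-B)) := by
    have := ((hz0.sub_const (Ω:ℂ)).smul_const (1 : Matrix (Fin N) (Fin N) ℂ)).add
      (hAm0.const_smul (γ:ℂ))
    convert this using 2
    rw [hBdef]
    module
  -- determinant facts
  have hBdet : IsUnit B.det := (Matrix.isUnit_iff_isUnit_det B).mp hinv
  have hdB : (-B).det ≠ 0 := by
    have : IsUnit (-B) := hinv.neg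
    exact ((Matrix.isUnit_iff_isUnit_det _).mp this).ne_zero
  have hnegBinv : (-B)⁻¹ = -(B⁻¹) := by
    refine Matrix.inv_eq_right_inv ?_
    rw [neg_mul_neg, Matrix.mul_nonsing_inv _ hBdet]
  have hdetT : ∀ (F : ℂ → Matrix (Fin N) (Fin N) ℂ), Tendsto F l (nhds (-B)) →
      Tendsto (fun z => (F z).det) l (nhds ((-B).det)) := by
    intro F hF
    exact ((Continuous.matrix_det continuous_id).tendsto (-B)).comp hF
  have ev1 : ∀ᶠ z in l, (Fp z).det ≠ 0 := (hdetT Fp hFpT).eventually_ne hdB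
  have ev2 : ∀ᶠ z in l, (Fm z).det ≠ 0 := (hdetT Fm hFmT).eventually_ne hdB
  -- inverses tend to -(B⁻¹)
  have hinvcont : ContinuousAt Inv.inv (-B) := by
    refine continuousAt_matrix_inv (-B) ?_
    rw [Ring.inverse_eq_inv']
    exact continuousAt_inv₀ hdB
  have hinvpT : Tendsto (fun z => (Fp z)⁻¹) l (nhds (-(B⁻¹))) := by
    have := hinvcont.tendsto.comp hFpT
    rwa [hnegBinv] at this
  have hinvmT : Tendsto (fun z => (Fm z)⁻¹) l (nhds (-(B⁻¹))) := by
    have := hinvcont.tendsto.comp hFmT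
    rwa [hnegBinv] at this
  -- product of inverses tends to B⁻¹ ^ 2
  have hH : Tendsto (fun z => (Fp z)⁻¹ * (Fm z)⁻¹ - B⁻¹ ^ 2) l (nhds 0) := by
    have h1 := hinvpT.mul hinvmT
    have h2 : -(B⁻¹) * -(B⁻¹) = B⁻¹ ^ 2 := by rw [neg_mul_neg, sq]
    rw [h2] at h1
    have h3 := h1.sub_const (B⁻¹ ^ 2)
    rwa [sub_self] at h3
  -- remainder is O(z^3)
  have hRO : R =O[l] fun z : ℂ => ‖z‖ ^ 3 := by
    refine (hm.sub hp).congr_left fun z => ?_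
    rw [hRdef]
    match_scalars <;> ring
  -- eventual algebraic identity
  have hev : (fun z : ℂ => (Fp z)⁻¹ - (Fm z)⁻¹ -
        (Complex.I * (γ : ℂ) * 8 * (Real.pi : ℂ) ^ 2 / (c : ℂ) ^ 2 * z ^ 2) • (B⁻¹ ^ 2))
      =ᶠ[l] (fun z : ℂ =>
        (Complex.I * (γ : ℂ) * 8 * (Real.pi : ℂ) ^ 2 / (c : ℂ) ^ 2 * z ^ 2) •
          ((Fp z)⁻¹ * (Fm z)⁻¹ - B⁻¹ ^ 2) +
        (γ : ℂ) • ((Fp z)⁻¹ * R z * (Fm z)⁻¹)) := by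
    filter_upwards [ev1, ev2] with z h1 h2
    have hu1 : IsUnit (Fp z).det := isUnit_iff_ne_zero.mpr h1
    have hu2 : IsUnit (Fm z).det := isUnit_iff_ne_zero.mpr h2
    have key : (Fp z)⁻¹ - (Fm z)⁻¹ = (Fp z)⁻¹ * (Fm z - Fp z) * (Fm z)⁻¹ := by
      have e : (Fp z)⁻¹ * (Fm z - Fp z) * (Fm z)⁻¹
          = (Fp z)⁻¹ * (Fm z * (Fm z)⁻¹) - (Fp z)⁻¹ * Fp z * (Fm z)⁻¹ := by
        rw [mul_sub, sub_mul, mul_assoc]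
      rw [e, Matrix.mul_nonsing_inv _ hu2, Matrix.nonsing_inv_mul _ hu1, mul_one, one_mul]
    have hFmp : Fm z - Fp z = (γ : ℂ) •
        (R z + (Complex.I * 8 * (Real.pi : ℂ) ^ 2 / (c : ℂ) ^ 2 * z ^ 2) •
          (1 : Matrix (Fin N) (Fin N) ℂ)) := by
      rw [hFpdef, hFmdef, hRdef]
      module
    rw [key, hFmp]
    simp only [smul_add, mul_add, add_mul, mul_smul_comm, smul_mul_assoc, Matrix.mul_one,
      smul_sub, smul_smul]
    module
  -- first piece is o(z^2)
  have hcoef : (fun z : ℂ => Complex.I * (γ : ℂ) * 8 * (Real.pi : ℂ) ^ 2 / (c : ℂ) ^ 2 * z ^ 2)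
      =O[l] fun z : ℂ => ‖z‖ ^ 2 := by
    rw [isBigO_iff]
    refine ⟨‖Complex.I * (γ : ℂ) * 8 * (Real.pi : ℂ) ^ 2 / (c : ℂ) ^ 2‖,
      Eventually.of_forall fun z => ?_⟩
    rw [norm_mul, norm_pow]
    simp [abs_of_nonneg]
  have h1 : (fun z : ℂ =>
      (Complex.I * (γ : ℂ) * 8 * (Real.pi : ℂ) ^ 2 / (c : ℂ) ^ 2 * z ^ 2) •
        ((Fp z)⁻¹ * (Fm z)⁻¹ - B⁻¹ ^ 2)) =o[l] fun z : ℂ => ‖z‖ ^ 2 := by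
    have hHl : (fun z => (Fp z)⁻¹ * (Fm z)⁻¹ - B⁻¹ ^ 2) =o[l] (fun _ : ℂ => (1:ℝ)) :=
      (isLittleO_one_iff ℝ).2 hH
    have := hcoef.smul_isLittleO hHl
    simpa using this
  -- second piece is o(z^2)
  have hz3o : (fun z : ℂ => ‖z‖ ^ 3) =o[l] fun z : ℂ => ‖z‖ ^ 2 := by
    have a1 : (fun z : ℂ => ‖z‖) =o[l] (fun _ : ℂ => (1:ℝ)) :=
      (isLittleO_one_iff ℝ).2 (by simpa using hz0.norm)
    have a2 := a1.mul_isBigO (isBigO_refl (fun z : ℂ => ‖z‖ ^ 2) l)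
    have a3 : (fun z : ℂ => ‖z‖ * ‖z‖ ^ 2) =o[l] fun z : ℂ => ‖z‖ ^ 2 := by simpa using a2
    exact a3.congr_left fun z => by ring
  have h2 : (fun z : ℂ => (γ : ℂ) • ((Fp z)⁻¹ * R z * (Fm z)⁻¹)) =o[l]
      fun z : ℂ => ‖z‖ ^ 2 := by
    have b1 : (fun z => (Fp z)⁻¹) =O[l] (fun _ : ℂ => (1:ℝ)) := hinvpT.isBigO_one ℝ
    have b2 : (fun z => (Fm z)⁻¹) =O[l] (fun _ : ℂ => (1:ℝ)) := hinvmT.isBigO_one ℝ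
    have t := mmul_isBigO (mmul_isBigO b1 hRO) b2
    have t2 : (fun z => (Fp z)⁻¹ * R z * (Fm z)⁻¹) =O[l] fun z : ℂ => ‖z‖ ^ 3 := by
      simpa using t
    exact (t2.trans_isLittleO hz3o).const_smul_left (γ : ℂ)
  exact hev.trans_isLittleO (h1.add h2)
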